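/- Let n ≥ 1, x_t, x_s, β ∈ ℝⁿ, α ∈ ℝ, σ_t, σ_s > 0, ρ ∈ (−1, 1), and σ_{t,s} = ρσ_tσ_s. Let (U_t, U_s) have the bivariate normal distribution with means x_t'β + α and x_s'β + α, standard deviations σ_t and σ_s, and correlation ρ. Then for all integers k ≥ 1 and m ≥ 1: E[(U_t^{k+1}U_s^m − U_s^{m+1}U_t^k − U_t^k U_s^m·(x_t − x_s)'β − k·U_t^{k-1}U_s^m·(σ_t² − σ_{t,s}) + m·U_s^{m-1}U_t^k·(σ_s² − σ_{t,s}))·1{U_t>0, U_s>0}] = 0. -/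

import Mathlib

open MeasureTheory

/-- Density of the nondegenerate bivariate normal distribution with means `μ₁, μ₂`,
standard deviations `σ₁, σ₂ > 0` and correlation `ρ ∈ (−1, 1)`. -/
noncomputable def binormalPDF (μ₁ μ₂ σ₁ σ₂ ρ u₁ u₂ : ℝ) : ℝ :=
  (1 / (2 * Real.pi * σ₁ * σ₂ * Real.sqrt (1 - ρ ^ 2))) *
    Real.exp (-(1 / (2 * (1 - ρ ^ 2))) *
      ((u₁ - μ₁) ^ 2 / σ₁ ^ 2 - 2 * ρ * (u₁ - μ₁) * (u₂ - μ₂) / (σ₁ * σ₂)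
        + (u₂ - μ₂) ^ 2 / σ₂ ^ 2))

open Real Filter Topology Set
set_option maxHeartbeats 1000000


lemma aux_int_pow_gauss {b : ℝ} (hb : 0 < b) (n : ℕ) :
    Integrable fun x : ℝ => x ^ n * Real.exp (-b * x ^ 2) := by
  have hn : (-1 : ℝ) < (n : ℝ) := lt_of_lt_of_le (by norm_num) (Nat.cast_nonneg n)
  simpa [Real.rpow_natCast] using integrable_rpow_mul_exp_neg_mul_sq hb hn

lemma aux_pow_add_le (s t : ℝ) (hs : 0 ≤ s) (ht : 0 ≤ t) (n : ℕ) :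
    (s + t) ^ n ≤ 2 ^ n * (s ^ n + t ^ n) := by
  have h1 : s + t ≤ 2 * max s t := by
    rcases le_total s t with h | h <;> simp [max_eq_right, max_eq_left, h] <;> linarith
  calc (s + t) ^ n ≤ (2 * max s t) ^ n :=
        pow_le_pow_left₀ (by positivity) h1 n
    _ = 2 ^ n * (max s t) ^ n := by rw [mul_pow]
    _ ≤ 2 ^ n * (s ^ n + t ^ n) := by
        gcongr
        rcases le_total s t with h | h
        · rw [max_eq_right h]; exact le_add_of_nonneg_left (by positivity)
        · rw [max_eq_left h]; exact le_add_of_nonneg_right (by positivity)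

lemma aux_int_quad (A B C : ℝ) (hA : 0 < A) (n : ℕ) :
    Integrable fun x : ℝ => x ^ n * Real.exp (-(A * x ^ 2 + B * x + C)) := by
  have key : ∀ x : ℝ, Real.exp (-(A * x ^ 2 + B * x + C))
      = Real.exp (B ^ 2 / (4 * A) - C) * Real.exp (-A * (x - -B / (2 * A)) ^ 2) := by
    intro x; rw [← Real.exp_add]; congr 1; field_simp; ring
  set μ := -B / (2 * A) with hμ
  have hg : Integrable fun y : ℝ => (y + μ) ^ n * Real.exp (-A * y ^ 2) := by
    have hdom : Integrable fun y : ℝ =>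
        2 ^ n * (|y| ^ n * Real.exp (-A * y ^ 2)) + (2 ^ n * |μ| ^ n) * Real.exp (-A * y ^ 2) := by
      refine Integrable.add (Integrable.const_mul ?_ _) ((integrable_exp_neg_mul_sq hA).const_mul _)
      refine (aux_int_pow_gauss hA n).abs.congr (Eventually.of_forall fun x => ?_)
      dsimp only; rw [abs_mul, abs_pow, abs_of_pos (Real.exp_pos _)]
    refine hdom.mono' ?_ (Eventually.of_forall fun y => ?_)
    · exact (((continuous_id.add continuous_const).pow n).mul
        (Real.continuous_exp.comp (by fun_prop))).aestronglyMeasurable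
    · rw [Real.norm_eq_abs, abs_mul, abs_pow, abs_of_pos (Real.exp_pos _)]
      have h2 : |y + μ| ^ n ≤ 2 ^ n * (|y| ^ n + |μ| ^ n) := by
        calc |y + μ| ^ n ≤ (|y| + |μ|) ^ n :=
              pow_le_pow_left₀ (abs_nonneg _) (abs_add_le _ _) n
          _ ≤ 2 ^ n * (|y| ^ n + |μ| ^ n) := aux_pow_add_le _ _ (abs_nonneg _) (abs_nonneg _) n
      have := mul_le_mul_of_nonneg_right h2 (Real.exp_pos (-A * y ^ 2)).le
      linarith [this]
  have hshift := hg.comp_sub_right μ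
  refine ((hshift.const_mul (Real.exp (B ^ 2 / (4 * A) - C))).congr
    (Eventually.of_forall fun x => ?_))
  dsimp only
  rw [sub_add_cancel, key x]; ring

lemma aux_tendsto_quad (A B C : ℝ) (hA : 0 < A) (n : ℕ) :
    Tendsto (fun x : ℝ => x ^ n * Real.exp (-(A * x ^ 2 + B * x + C))) atTop (𝓝 0) := by
  have h1 : Tendsto (fun x : ℝ => x ^ n * Real.exp (-x)) atTop (𝓝 0) :=
    Real.tendsto_pow_mul_exp_neg_atTop_nhds_zero n
  have h2 : Tendsto (fun x : ℝ => x - (A * x ^ 2 + B * x + C)) atTop atBot := by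
    have hAx : Tendsto (fun x : ℝ => A * x) atTop atTop :=
      (tendsto_const_mul_atTop_of_pos hA).mpr tendsto_id
    have hneg : Tendsto (fun x : ℝ => -(A * x)) atTop atBot := tendsto_neg_atTop_atBot.comp hAx
    have hlin : Tendsto (fun x : ℝ => (1 - B) + -(A * x)) atTop atBot :=
      tendsto_atBot_add_const_left _ _ hneg
    have hmul : Tendsto (fun x : ℝ => x * ((1 - B) + -(A * x))) atTop atBot :=
      Tendsto.atTop_mul_atBot₀ tendsto_id hlin
    have := tendsto_atBot_add_const_right _ (-C) hmul
    refine this.congr fun x => by ring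
  have h3 : Tendsto (fun x : ℝ => Real.exp (x - (A * x ^ 2 + B * x + C))) atTop (𝓝 0) :=
    Real.tendsto_exp_atBot.comp h2
  have h4 := h1.mul h3
  rw [mul_zero] at h4
  refine h4.congr fun x => ?_
  rw [mul_assoc, ← Real.exp_add]
  congr 2
  ring

lemma aux_int_abs_shift (c μ : ℝ) (hc : 0 < c) (n : ℕ) :
    Integrable fun x : ℝ => |x| ^ n * Real.exp (-(c * (x - μ) ^ 2)) := by
  have h : Integrable fun x : ℝ => x ^ n * Real.exp (-(c * x ^ 2 + -(2 * c * μ) * x + c * μ ^ 2)) := by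
    have : (0:ℝ) < c := hc
    exact aux_int_quad c _ _ hc n
  refine h.abs.congr (Eventually.of_forall fun x => ?_)
  dsimp only
  rw [abs_mul, abs_pow, abs_of_pos (Real.exp_pos _)]
  congr 2
  ring

lemma aux_corr (ρ x y : ℝ) (h : |ρ| ≤ 1) :
    (1 - |ρ|) * (x ^ 2 + y ^ 2) ≤ x ^ 2 - 2 * ρ * x * y + y ^ 2 := by
  rcases abs_cases ρ with ⟨h1, h2⟩ | ⟨h1, h2⟩ <;> rw [h1] <;>
    nlinarith [sq_nonneg (x - y), sq_nonneg (x + y)]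


noncomputable def Zc (σ₁ σ₂ ρ : ℝ) : ℝ := 1 / (2 * Real.pi * σ₁ * σ₂ * Real.sqrt (1 - ρ ^ 2))
noncomputable def A1 (σ₁ ρ : ℝ) : ℝ := 1 / (2 * (1 - ρ ^ 2) * σ₁ ^ 2)
noncomputable def B1 (μ₁ μ₂ σ₁ σ₂ ρ v : ℝ) : ℝ :=
  (1 / (2 * (1 - ρ ^ 2))) * (-2 * μ₁ / σ₁ ^ 2 - 2 * ρ * (v - μ₂) / (σ₁ * σ₂))
noncomputable def C1 (μ₁ μ₂ σ₁ σ₂ ρ v : ℝ) : ℝ :=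
  (1 / (2 * (1 - ρ ^ 2))) * (μ₁ ^ 2 / σ₁ ^ 2 + 2 * ρ * μ₁ * (v - μ₂) / (σ₁ * σ₂) + (v - μ₂) ^ 2 / σ₂ ^ 2)

/-- `Dp` is the partial derivative in the first variable of `u ^ (a+1) * (v ^ (b+1) * pdf u v)`. -/
noncomputable def Dp (μ₁ μ₂ σ₁ σ₂ ρ : ℝ) (a b : ℕ) (v u : ℝ) : ℝ :=
  ((a + 1 : ℝ) * u ^ a - u ^ (a + 1) * (2 * A1 σ₁ ρ * u + B1 μ₁ μ₂ σ₁ σ₂ ρ v)) *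
    (v ^ (b + 1) * binormalPDF μ₁ μ₂ σ₁ σ₂ ρ u v)

lemma binormal_symm (μ₁ μ₂ σ₁ σ₂ ρ u v : ℝ) :
    binormalPDF μ₂ μ₁ σ₂ σ₁ ρ v u = binormalPDF μ₁ μ₂ σ₁ σ₂ ρ u v := by
  unfold binormalPDF
  ring_nf

lemma binormal_eq_form (μ₁ μ₂ σ₁ σ₂ ρ : ℝ) (hσ₁ : σ₁ ≠ 0) (hσ₂ : σ₂ ≠ 0)
    (hν : (1 - ρ ^ 2) ≠ 0) (u v : ℝ) :
    binormalPDF μ₁ μ₂ σ₁ σ₂ ρ u v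
      = Zc σ₁ σ₂ ρ * Real.exp (-(A1 σ₁ ρ * u ^ 2 + B1 μ₁ μ₂ σ₁ σ₂ ρ v * u + C1 μ₁ μ₂ σ₁ σ₂ ρ v)) := by
  unfold binormalPDF Zc A1 B1 C1
  congr 1
  congr 1
  field_simp
  ring

lemma binormal_continuous (μ₁ μ₂ σ₁ σ₂ ρ : ℝ) :
    Continuous (fun p : ℝ × ℝ => binormalPDF μ₁ μ₂ σ₁ σ₂ ρ p.1 p.2) := by
  unfold binormalPDF
  fun_prop

lemma binormal_int2 (μ₁ μ₂ σ₁ σ₂ ρ : ℝ) (hσ₁ : 0 < σ₁) (hσ₂ : 0 < σ₂)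
    (hρ₁ : -1 < ρ) (hρ₂ : ρ < 1) (a b : ℕ) :
    Integrable fun p : ℝ × ℝ => p.1 ^ a * p.2 ^ b * binormalPDF μ₁ μ₂ σ₁ σ₂ ρ p.1 p.2 := by
  have habs : |ρ| < 1 := abs_lt.mpr ⟨hρ₁, hρ₂⟩
  have hν : (0:ℝ) < 1 - ρ ^ 2 := by nlinarith
  set ν := 1 - ρ ^ 2 with hνdef
  have hρ1 : (0:ℝ) < 1 - |ρ| := by linarith
  have hc₁ : (0:ℝ) < (1 - |ρ|) / (2 * ν * σ₁ ^ 2) :=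
    div_pos hρ1 (mul_pos (mul_pos two_pos hν) (pow_pos hσ₁ 2))
  have hc₂ : (0:ℝ) < (1 - |ρ|) / (2 * ν * σ₂ ^ 2) :=
    div_pos hρ1 (mul_pos (mul_pos two_pos hν) (pow_pos hσ₂ 2))
  set c₁ := (1 - |ρ|) / (2 * ν * σ₁ ^ 2) with hc₁def
  set c₂ := (1 - |ρ|) / (2 * ν * σ₂ ^ 2) with hc₂def
  set Z := 1 / (2 * Real.pi * σ₁ * σ₂ * Real.sqrt ν) with hZdef
  have hZ : 0 < Z := by
    rw [hZdef]
    have := Real.pi_pos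
    have := Real.sqrt_pos.mpr hν
    positivity
  have hg : Integrable fun p : ℝ × ℝ =>
      Z * ((|p.1| ^ a * Real.exp (-(c₁ * (p.1 - μ₁) ^ 2)))
        * (|p.2| ^ b * Real.exp (-(c₂ * (p.2 - μ₂) ^ 2)))) := by
    have h12 := (aux_int_abs_shift c₁ μ₁ hc₁ a).mul_prod (aux_int_abs_shift c₂ μ₂ hc₂ b)
    rw [← Measure.volume_eq_prod] at h12
    exact h12.const_mul _
  refine hg.mono' ?_ (Eventually.of_forall fun p => ?_)
  · exact (((continuous_fst.pow a).mul (continuous_snd.pow b)).mul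
      (binormal_continuous μ₁ μ₂ σ₁ σ₂ ρ)).aestronglyMeasurable
  · obtain ⟨u, v⟩ := p
    dsimp only
    have harg : -(1 / (2 * ν)) *
        ((u - μ₁) ^ 2 / σ₁ ^ 2 - 2 * ρ * (u - μ₁) * (v - μ₂) / (σ₁ * σ₂) + (v - μ₂) ^ 2 / σ₂ ^ 2)
        ≤ -(c₁ * (u - μ₁) ^ 2) + -(c₂ * (v - μ₂) ^ 2) := by
      have hQ := aux_corr ρ (σ₂ * (u - μ₁)) (σ₁ * (v - μ₂)) habs.le
      have e1 : -(1 / (2 * ν)) *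
          ((u - μ₁) ^ 2 / σ₁ ^ 2 - 2 * ρ * (u - μ₁) * (v - μ₂) / (σ₁ * σ₂) + (v - μ₂) ^ 2 / σ₂ ^ 2)
          = -((σ₂ * (u - μ₁)) ^ 2 - 2 * ρ * (σ₂ * (u - μ₁)) * (σ₁ * (v - μ₂)) + (σ₁ * (v - μ₂)) ^ 2)
            / (2 * ν * σ₁ ^ 2 * σ₂ ^ 2) := by
        field_simp
      have e2 : -(c₁ * (u - μ₁) ^ 2) + -(c₂ * (v - μ₂) ^ 2)
          = -((1 - |ρ|) * ((σ₂ * (u - μ₁)) ^ 2 + (σ₁ * (v - μ₂)) ^ 2))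
            / (2 * ν * σ₁ ^ 2 * σ₂ ^ 2) := by
        rw [hc₁def, hc₂def]
        field_simp
        ring
      rw [e1, e2]
      have hD : (0:ℝ) < 2 * ν * σ₁ ^ 2 * σ₂ ^ 2 := by positivity
      exact (div_le_div_iff_of_pos_right hD).mpr (neg_le_neg hQ)
    have hexp : Real.exp (-(1 / (2 * ν)) *
        ((u - μ₁) ^ 2 / σ₁ ^ 2 - 2 * ρ * (u - μ₁) * (v - μ₂) / (σ₁ * σ₂) + (v - μ₂) ^ 2 / σ₂ ^ 2))
        ≤ Real.exp (-(c₁ * (u - μ₁) ^ 2)) * Real.exp (-(c₂ * (v - μ₂) ^ 2)) := by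
      rw [← Real.exp_add]
      exact Real.exp_le_exp.mpr harg
    have hpdf : binormalPDF μ₁ μ₂ σ₁ σ₂ ρ u v = Z * Real.exp (-(1 / (2 * ν)) *
        ((u - μ₁) ^ 2 / σ₁ ^ 2 - 2 * ρ * (u - μ₁) * (v - μ₂) / (σ₁ * σ₂) + (v - μ₂) ^ 2 / σ₂ ^ 2)) := rfl
    rw [Real.norm_eq_abs, abs_mul, abs_mul, abs_pow, abs_pow, hpdf,
      abs_of_pos (by positivity : (0:ℝ) < Z * Real.exp _)]
    calc |u| ^ a * |v| ^ b * (Z * Real.exp (-(1 / (2 * ν)) *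
          ((u - μ₁) ^ 2 / σ₁ ^ 2 - 2 * ρ * (u - μ₁) * (v - μ₂) / (σ₁ * σ₂) + (v - μ₂) ^ 2 / σ₂ ^ 2)))
        ≤ |u| ^ a * |v| ^ b * (Z * (Real.exp (-(c₁ * (u - μ₁) ^ 2)) * Real.exp (-(c₂ * (v - μ₂) ^ 2)))) := by
          gcongr
      _ = Z * (|u| ^ a * Real.exp (-(c₁ * (u - μ₁) ^ 2)) * (|v| ^ b * Real.exp (-(c₂ * (v - μ₂) ^ 2)))) := by
          ring

lemma Dp_hasDeriv (μ₁ μ₂ σ₁ σ₂ ρ : ℝ) (hσ₁ : σ₁ ≠ 0) (hσ₂ : σ₂ ≠ 0) (hν : (1 - ρ ^ 2) ≠ 0)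
    (a b : ℕ) (v u : ℝ) :
    HasDerivAt (fun u => u ^ (a + 1) * (v ^ (b + 1) * binormalPDF μ₁ μ₂ σ₁ σ₂ ρ u v))
      (Dp μ₁ μ₂ σ₁ σ₂ ρ a b v u) u := by
  have h1 : HasDerivAt (fun u : ℝ => A1 σ₁ ρ * u ^ 2 + B1 μ₁ μ₂ σ₁ σ₂ ρ v * u + C1 μ₁ μ₂ σ₁ σ₂ ρ v)
      (2 * A1 σ₁ ρ * u + B1 μ₁ μ₂ σ₁ σ₂ ρ v) u := by
    have h := (((hasDerivAt_pow 2 u).const_mul (A1 σ₁ ρ)).add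
      ((hasDerivAt_id u).const_mul (B1 μ₁ μ₂ σ₁ σ₂ ρ v))).add_const (C1 μ₁ μ₂ σ₁ σ₂ ρ v)
    refine h.congr_deriv ?_
    push_cast
    ring
  have hexp := (h1.neg).exp
  have hmul := (hasDerivAt_pow (a + 1) u).mul (hexp.const_mul (v ^ (b + 1) * Zc σ₁ σ₂ ρ))
  have hfun : (fun u => u ^ (a + 1) * (v ^ (b + 1) * binormalPDF μ₁ μ₂ σ₁ σ₂ ρ u v))
      = fun u => u ^ (a + 1) * ((v ^ (b + 1) * Zc σ₁ σ₂ ρ) *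
        Real.exp (-(A1 σ₁ ρ * u ^ 2 + B1 μ₁ μ₂ σ₁ σ₂ ρ v * u + C1 μ₁ μ₂ σ₁ σ₂ ρ v))) :=
    funext fun u => by rw [binormal_eq_form μ₁ μ₂ σ₁ σ₂ ρ hσ₁ hσ₂ hν u v]; ring
  rw [hfun]
  refine hmul.congr_deriv ?_
  unfold Dp
  rw [binormal_eq_form μ₁ μ₂ σ₁ σ₂ ρ hσ₁ hσ₂ hν u v]
  simp only [Nat.add_sub_cancel, Pi.neg_apply]
  push_cast
  ring


lemma Dp_integral_zero (μ₁ μ₂ σ₁ σ₂ ρ : ℝ) (hσ₁ : 0 < σ₁) (hσ₂ : 0 < σ₂)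
    (hρ₁ : -1 < ρ) (hρ₂ : ρ < 1) (a b : ℕ) (v : ℝ) :
    ∫ u in Set.Ioi (0 : ℝ), Dp μ₁ μ₂ σ₁ σ₂ ρ a b v u = 0 := by
  have hν : (0:ℝ) < 1 - ρ ^ 2 := by nlinarith
  have hA : 0 < A1 σ₁ ρ := by unfold A1; positivity
  set B := B1 μ₁ μ₂ σ₁ σ₂ ρ v with hB
  set C := C1 μ₁ μ₂ σ₁ σ₂ ρ v with hC
  set Z := Zc σ₁ σ₂ ρ with hZ
  have hform : ∀ u, binormalPDF μ₁ μ₂ σ₁ σ₂ ρ u v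
      = Z * Real.exp (-(A1 σ₁ ρ * u ^ 2 + B * u + C)) := fun u =>
    binormal_eq_form μ₁ μ₂ σ₁ σ₂ ρ hσ₁.ne' hσ₂.ne' hν.ne' u v
  set F : ℝ → ℝ := fun u => u ^ (a + 1) * (v ^ (b + 1) * binormalPDF μ₁ μ₂ σ₁ σ₂ ρ u v) with hF
  have hcontF : Continuous F := by
    rw [hF]
    unfold binormalPDF
    fun_prop
  have hint : IntegrableOn (fun u => Dp μ₁ μ₂ σ₁ σ₂ ρ a b v u) (Set.Ioi 0) := by
    apply Integrable.integrableOn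
    have hcomb : ∀ u : ℝ, Dp μ₁ μ₂ σ₁ σ₂ ρ a b v u =
        ((a + 1 : ℝ) * (v ^ (b + 1) * Z)) * (u ^ a * Real.exp (-(A1 σ₁ ρ * u ^ 2 + B * u + C)))
        + (-(2 * A1 σ₁ ρ) * (v ^ (b + 1) * Z)) * (u ^ (a + 2) * Real.exp (-(A1 σ₁ ρ * u ^ 2 + B * u + C)))
        + (-B * (v ^ (b + 1) * Z)) * (u ^ (a + 1) * Real.exp (-(A1 σ₁ ρ * u ^ 2 + B * u + C))) := by
      intro u
      unfold Dp
      rw [hform u]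
      ring
    simp only [hcomb]
    exact (((aux_int_quad _ B C hA a).const_mul _).add
      ((aux_int_quad _ B C hA (a + 2)).const_mul _)).add
      ((aux_int_quad _ B C hA (a + 1)).const_mul _)
  have htend : Tendsto F atTop (𝓝 0) := by
    have h := (aux_tendsto_quad (A1 σ₁ ρ) B C hA (a + 1)).const_mul (v ^ (b + 1) * Z)
    rw [mul_zero] at h
    refine h.congr fun u => ?_
    rw [hF]
    dsimp only
    rw [hform u]
    ring
  have hderiv : ∀ u ∈ Set.Ioi (0:ℝ), HasDerivAt F (Dp μ₁ μ₂ σ₁ σ₂ ρ a b v u) u := fun u _ =>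
    Dp_hasDeriv μ₁ μ₂ σ₁ σ₂ ρ hσ₁.ne' hσ₂.ne' hν.ne' a b v u
  have h0 : F 0 = 0 := by simp [hF]
  have hie := integral_Ioi_of_hasDerivAt_of_tendsto hcontF.continuousWithinAt hderiv hint htend
  rw [hie, h0, sub_zero]

lemma int_Dp1 (μ₁ μ₂ σ₁ σ₂ ρ : ℝ) (hσ₁ : 0 < σ₁) (hσ₂ : 0 < σ₂)
    (hρ₁ : -1 < ρ) (hρ₂ : ρ < 1) (k m : ℕ) :
    Integrable fun p : ℝ × ℝ => Dp μ₁ μ₂ σ₁ σ₂ ρ k m p.2 p.1 := by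
  have hcomb : ∀ p : ℝ × ℝ, Dp μ₁ μ₂ σ₁ σ₂ ρ k m p.2 p.1 =
      ((k : ℝ) + 1) * (p.1 ^ k * p.2 ^ (m + 1) * binormalPDF μ₁ μ₂ σ₁ σ₂ ρ p.1 p.2)
      + (-(2 * A1 σ₁ ρ)) * (p.1 ^ (k + 2) * p.2 ^ (m + 1) * binormalPDF μ₁ μ₂ σ₁ σ₂ ρ p.1 p.2)
      + (-((1 / (2 * (1 - ρ ^ 2))) * (-2 * μ₁ / σ₁ ^ 2 + 2 * ρ * μ₂ / (σ₁ * σ₂))))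
          * (p.1 ^ (k + 1) * p.2 ^ (m + 1) * binormalPDF μ₁ μ₂ σ₁ σ₂ ρ p.1 p.2)
      + (-((1 / (2 * (1 - ρ ^ 2))) * (-2 * ρ / (σ₁ * σ₂))))
          * (p.1 ^ (k + 1) * p.2 ^ (m + 2) * binormalPDF μ₁ μ₂ σ₁ σ₂ ρ p.1 p.2) := by
    intro p
    unfold Dp B1
    push_cast
    ring
  simp only [hcomb]
  exact (((((binormal_int2 μ₁ μ₂ σ₁ σ₂ ρ hσ₁ hσ₂ hρ₁ hρ₂ k (m+1)).const_mul _).add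
    ((binormal_int2 μ₁ μ₂ σ₁ σ₂ ρ hσ₁ hσ₂ hρ₁ hρ₂ (k+2) (m+1)).const_mul _)).add
    ((binormal_int2 μ₁ μ₂ σ₁ σ₂ ρ hσ₁ hσ₂ hρ₁ hρ₂ (k+1) (m+1)).const_mul _)).add
    ((binormal_int2 μ₁ μ₂ σ₁ σ₂ ρ hσ₁ hσ₂ hρ₁ hρ₂ (k+1) (m+2)).const_mul _))

lemma int_Dp2 (μ₁ μ₂ σ₁ σ₂ ρ : ℝ) (hσ₁ : 0 < σ₁) (hσ₂ : 0 < σ₂)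
    (hρ₁ : -1 < ρ) (hρ₂ : ρ < 1) (k m : ℕ) :
    Integrable fun p : ℝ × ℝ => Dp μ₂ μ₁ σ₂ σ₁ ρ m k p.1 p.2 := by
  have hcomb : ∀ p : ℝ × ℝ, Dp μ₂ μ₁ σ₂ σ₁ ρ m k p.1 p.2 =
      ((m : ℝ) + 1) * (p.1 ^ (k + 1) * p.2 ^ m * binormalPDF μ₁ μ₂ σ₁ σ₂ ρ p.1 p.2)
      + (-(2 * A1 σ₂ ρ)) * (p.1 ^ (k + 1) * p.2 ^ (m + 2) * binormalPDF μ₁ μ₂ σ₁ σ₂ ρ p.1 p.2)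
      + (-((1 / (2 * (1 - ρ ^ 2))) * (-2 * μ₂ / σ₂ ^ 2 + 2 * ρ * μ₁ / (σ₂ * σ₁))))
          * (p.1 ^ (k + 1) * p.2 ^ (m + 1) * binormalPDF μ₁ μ₂ σ₁ σ₂ ρ p.1 p.2)
      + (-((1 / (2 * (1 - ρ ^ 2))) * (-2 * ρ / (σ₂ * σ₁))))
          * (p.1 ^ (k + 2) * p.2 ^ (m + 1) * binormalPDF μ₁ μ₂ σ₁ σ₂ ρ p.1 p.2) := by
    intro p
    unfold Dp B1
    rw [binormal_symm μ₁ μ₂ σ₁ σ₂ ρ p.1 p.2]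
    push_cast
    ring
  simp only [hcomb]
  exact (((((binormal_int2 μ₁ μ₂ σ₁ σ₂ ρ hσ₁ hσ₂ hρ₁ hρ₂ (k+1) m).const_mul _).add
    ((binormal_int2 μ₁ μ₂ σ₁ σ₂ ρ hσ₁ hσ₂ hρ₁ hρ₂ (k+1) (m+2)).const_mul _)).add
    ((binormal_int2 μ₁ μ₂ σ₁ σ₂ ρ hσ₁ hσ₂ hρ₁ hρ₂ (k+1) (m+1)).const_mul _)).add
    ((binormal_int2 μ₁ μ₂ σ₁ σ₂ ρ hσ₁ hσ₂ hρ₁ hρ₂ (k+2) (m+1)).const_mul _))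

lemma zero_Dp1 (μ₁ μ₂ σ₁ σ₂ ρ : ℝ) (hσ₁ : 0 < σ₁) (hσ₂ : 0 < σ₂)
    (hρ₁ : -1 < ρ) (hρ₂ : ρ < 1) (k m : ℕ) :
    ∫ p in Set.Ioi (0:ℝ) ×ˢ Set.Ioi (0:ℝ), Dp μ₁ μ₂ σ₁ σ₂ ρ k m p.2 p.1 = 0 := by
  have hi := (int_Dp1 μ₁ μ₂ σ₁ σ₂ ρ hσ₁ hσ₂ hρ₁ hρ₂ k m).integrableOn
    (s := Set.Ioi (0:ℝ) ×ˢ Set.Ioi (0:ℝ))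
  rw [IntegrableOn, Measure.volume_eq_prod, ← Measure.prod_restrict] at hi
  rw [Measure.volume_eq_prod, ← Measure.prod_restrict, integral_prod_symm _ hi]
  simp only [Dp_integral_zero μ₁ μ₂ σ₁ σ₂ ρ hσ₁ hσ₂ hρ₁ hρ₂ k m, integral_zero]

lemma zero_Dp2 (μ₁ μ₂ σ₁ σ₂ ρ : ℝ) (hσ₁ : 0 < σ₁) (hσ₂ : 0 < σ₂)
    (hρ₁ : -1 < ρ) (hρ₂ : ρ < 1) (k m : ℕ) :
    ∫ p in Set.Ioi (0:ℝ) ×ˢ Set.Ioi (0:ℝ), Dp μ₂ μ₁ σ₂ σ₁ ρ m k p.1 p.2 = 0 := by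
  have hi := (int_Dp2 μ₁ μ₂ σ₁ σ₂ ρ hσ₁ hσ₂ hρ₁ hρ₂ k m).integrableOn
    (s := Set.Ioi (0:ℝ) ×ˢ Set.Ioi (0:ℝ))
  rw [IntegrableOn, Measure.volume_eq_prod, ← Measure.prod_restrict] at hi
  rw [Measure.volume_eq_prod, ← Measure.prod_restrict, integral_prod _ hi]
  simp only [Dp_integral_zero μ₂ μ₁ σ₂ σ₁ ρ hσ₂ hσ₁ hρ₁ hρ₂ m k, integral_zero]

theorem key_moment (μ₁ μ₂ σ₁ σ₂ ρ : ℝ) (hσ₁ : 0 < σ₁) (hσ₂ : 0 < σ₂)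
    (hρ₁ : -1 < ρ) (hρ₂ : ρ < 1) (k m : ℕ) :
    ∫ p in Set.Ioi (0 : ℝ) ×ˢ Set.Ioi (0 : ℝ),
        (p.1 ^ (k + 1 + 1) * p.2 ^ (m + 1) - p.2 ^ (m + 1 + 1) * p.1 ^ (k + 1)
            - p.1 ^ (k + 1) * p.2 ^ (m + 1) * (μ₁ - μ₂)
            - ((k : ℝ) + 1) * p.1 ^ k * p.2 ^ (m + 1) * (σ₁ ^ 2 - ρ * σ₁ * σ₂)
            + ((m : ℝ) + 1) * p.2 ^ m * p.1 ^ (k + 1) * (σ₂ ^ 2 - ρ * σ₁ * σ₂))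
          * binormalPDF μ₁ μ₂ σ₁ σ₂ ρ p.1 p.2 = 0 := by
  have hν : (0:ℝ) < 1 - ρ ^ 2 := by nlinarith
  have hKey : ∀ p : ℝ × ℝ,
      (p.1 ^ (k + 1 + 1) * p.2 ^ (m + 1) - p.2 ^ (m + 1 + 1) * p.1 ^ (k + 1)
            - p.1 ^ (k + 1) * p.2 ^ (m + 1) * (μ₁ - μ₂)
            - ((k : ℝ) + 1) * p.1 ^ k * p.2 ^ (m + 1) * (σ₁ ^ 2 - ρ * σ₁ * σ₂)
            + ((m : ℝ) + 1) * p.2 ^ m * p.1 ^ (k + 1) * (σ₂ ^ 2 - ρ * σ₁ * σ₂))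
          * binormalPDF μ₁ μ₂ σ₁ σ₂ ρ p.1 p.2
      = (-(σ₁ ^ 2 - ρ * σ₁ * σ₂)) * Dp μ₁ μ₂ σ₁ σ₂ ρ k m p.2 p.1
        + (σ₂ ^ 2 - ρ * σ₁ * σ₂) * Dp μ₂ μ₁ σ₂ σ₁ ρ m k p.1 p.2 := by
    intro p
    unfold Dp A1 B1
    rw [binormal_symm μ₁ μ₂ σ₁ σ₂ ρ p.1 p.2]
    field_simp
    ring
  simp only [hKey]
  rw [integral_add (((int_Dp1 μ₁ μ₂ σ₁ σ₂ ρ hσ₁ hσ₂ hρ₁ hρ₂ k m).integrableOn).const_mul _)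
      (((int_Dp2 μ₁ μ₂ σ₁ σ₂ ρ hσ₁ hσ₂ hρ₁ hρ₂ k m).integrableOn).const_mul _),
    integral_const_mul, integral_const_mul,
    zero_Dp1 μ₁ μ₂ σ₁ σ₂ ρ hσ₁ hσ₂ hρ₁ hρ₂ k m,
    zero_Dp2 μ₁ μ₂ σ₁ σ₂ ρ hσ₁ hσ₂ hρ₁ hρ₂ k m]
  ring


/-- Moment condition (Estm) for the non-stationary fixed-effects panel Tobit model:
with `(U_t, U_s)` bivariate normal with means `x_t'β + α`, `x_s'β + α`, standard deviations
`σ_t, σ_s`, and correlation `ρ` (covariance `σ_{t,s} = ρσ_tσ_s`), for all `k, m ≥ 1`,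
`E[(U_t^{k+1}U_s^m − U_s^{m+1}U_t^k − U_t^k U_s^m (x_t−x_s)'β − k U_t^{k-1}U_s^m (σ_t²−σ_{t,s})
   + m U_s^{m-1}U_t^k (σ_s²−σ_{t,s}))·1{U_t>0,U_s>0}] = 0`. -/
theorem panel_tobit_nonstationary_moment (n : ℕ) (hn : 1 ≤ n) (xt xs β : Fin n → ℝ) (α : ℝ)
    (σt σs ρ : ℝ) (hσt : 0 < σt) (hσs : 0 < σs) (hρ : ρ ∈ Set.Ioo (-1 : ℝ) 1)
    (σts : ℝ) (hσts : σts = ρ * σt * σs) (k m : ℕ) (hk : 1 ≤ k) (hm : 1 ≤ m) :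
    ∫ p in Set.Ioi (0 : ℝ) ×ˢ Set.Ioi (0 : ℝ),
        (p.1 ^ (k + 1) * p.2 ^ m - p.2 ^ (m + 1) * p.1 ^ k
            - p.1 ^ k * p.2 ^ m * (∑ i, (xt i - xs i) * β i)
            - (k : ℝ) * p.1 ^ (k - 1) * p.2 ^ m * (σt ^ 2 - σts)
            + (m : ℝ) * p.2 ^ (m - 1) * p.1 ^ k * (σs ^ 2 - σts))
          * binormalPDF (∑ i, xt i * β i + α) (∑ i, xs i * β i + α) σt σs ρ p.1 p.2 = 0 := by
  obtain ⟨k', rfl⟩ : ∃ k', k = k' + 1 := ⟨k - 1, (Nat.succ_pred_eq_of_pos hk).symm⟩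
  obtain ⟨m', rfl⟩ : ∃ m', m = m' + 1 := ⟨m - 1, (Nat.succ_pred_eq_of_pos hm).symm⟩
  subst hσts
  have hμ : ∑ i, (xt i - xs i) * β i
      = (∑ i, xt i * β i + α) - (∑ i, xs i * β i + α) := by
    simp_rw [sub_mul]
    rw [Finset.sum_sub_distrib]
    ring
  simp only [hμ, Nat.add_sub_cancel]
  push_cast
  exact key_moment (∑ i, xt i * β i + α) (∑ i, xs i * β i + α) σt σs ρ hσt hσs hρ.1 hρ.2 k' m'
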